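/- Let a ∈ ℂ be nonzero, b = -a/8, C ≠ 0, and f(z) = 6aC·e^{z/6}(C·e^{z/6} - 1) + a. Then for all z₀ ∈ ℂ: f(z₀) = a implies f'(z₀) = a, and f'(z₀) = b implies f(z₀) = b. -/

import Mathlib

theorem stmt_10 (a C : ℂ) (ha : a ≠ 0) (hC : C ≠ 0) (b : ℂ) (hb : b = -a / 8)
    (f : ℂ → ℂ)
    (hf : f = fun z => 6 * a * C * Complex.exp (z / 6) * (C * Complex.exp (z / 6) - 1) + a) :
    ∀ z₀ : ℂ, (f z₀ = a → deriv f z₀ = a) ∧ (deriv f z₀ = b → f z₀ = b) := by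
  intro z₀
  set u := C * Complex.exp (z₀ / 6) with hu
  have hu0 : u ≠ 0 := mul_ne_zero hC (Complex.exp_ne_zero _)
  have he : HasDerivAt (fun z : ℂ => Complex.exp (z / 6)) (Complex.exp (z₀ / 6) * (1 / 6)) z₀ := by
    simpa using ((hasDerivAt_id z₀).div_const 6).cexp
  have hd : HasDerivAt f (a * u * (2 * u - 1)) z₀ := by
    rw [hf]
    have h := ((he.const_mul (6 * a * C)).mul ((he.const_mul C).sub_const 1)).add_const a
    convert h using 1
    · rfl
    · rfl
    · rfl
    · rw [hu]; ring
  have hderiv : deriv f z₀ = a * u * (2 * u - 1) := hd.deriv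
  have hfz : f z₀ = 6 * a * u * (u - 1) + a := by rw [hf]; simp only []; rw [hu]; ring
  constructor
  · intro h
    rw [hfz] at h
    have h0 : (6 * a * u) * (u - 1) = 0 := by linear_combination h
    rcases mul_eq_zero.1 h0 with h' | h'
    · exact absurd h' (by simp [ha, hu0])
    · have hu1 : u = 1 := by linear_combination h'
      rw [hderiv, hu1]; ring
  · intro h
    rw [hderiv, hb] at h
    have h0 : (a * (4 * u - 1)) * (4 * u - 1) = 0 := by linear_combination 8 * h
    have h4 : 4 * u - 1 = 0 := by
      rcases mul_eq_zero.1 h0 with h' | h'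
      · rcases mul_eq_zero.1 h' with h'' | h''
        · exact absurd h'' ha
        · exact h''
      · exact h'
    rw [hfz, hb]
    linear_combination (a / 8 * (12 * u - 9)) * h4
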